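/- For every multigraph G, every edge e of G, and every m ∈ ℕ: P_DP(G-e,m) - P*_DP(G·e,m) ≤ P_DP(G,m). -/

import Mathlib

/-- A finite-multiplicity loopless multigraph on vertex set `V`:
`mult u v` is the number of parallel edges joining `u` and `v`. -/
structure Multigraph (V : Type) where
  mult : V → V → ℕ
  symm : ∀ u v, mult u v = mult v u
  loopless : ∀ v, mult v v = 0

/-- A full `m`-fold cover of a multigraph `G`.  The list of a vertex `u` is
identified with `{u} × Fin m`; for each ordered pair `(u,v)` and each edge index
`i` (only indices `i < G.mult u v` are relevant) the corresponding perfect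
matching between the two lists is recorded as a permutation of `Fin m`, the two
orientations of an edge giving inverse permutations. -/
structure FullCover {V : Type} (G : Multigraph V) (m : ℕ) where
  perm : V → V → ℕ → (Fin m ≃ Fin m)
  compat : ∀ u v i, perm v u i = (perm u v i).symm

/-- `f` (choosing one list element per vertex) is an `H`-coloring: it avoids all
cross edges of the cover. -/
def FullCover.IsColoring {V : Type} {G : Multigraph V} {m : ℕ}
    (c : FullCover G m) (f : V → Fin m) : Prop :=
  ∀ u v i, i < G.mult u v → (c.perm u v i) (f u) ≠ f v

/-- The number of `H`-colorings of `G` for the cover `c`. -/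
noncomputable def FullCover.numColorings {V : Type} {G : Multigraph V} {m : ℕ}
    (c : FullCover G m) : ℕ :=
  Nat.card {f : V → Fin m // c.IsColoring f}

/-- The DP color function: the minimum number of colorings over all full
`m`-fold covers. -/
noncomputable def Multigraph.PDP {V : Type} (G : Multigraph V) (m : ℕ) : ℕ :=
  sInf {n | ∃ c : FullCover G m, n = c.numColorings}

/-- The dual DP color function: the maximum number of colorings over all full
`m`-fold covers. -/
noncomputable def Multigraph.PDPdual {V : Type} (G : Multigraph V) (m : ℕ) : ℕ :=
  sSup {n | ∃ c : FullCover G m, n = c.numColorings}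

/-- The number of proper `m`-colorings of (the underlying graph of) `G`. -/
noncomputable def Multigraph.properCount {V : Type} (G : Multigraph V) (m : ℕ) : ℕ :=
  Nat.card {f : V → Fin m // ∀ u v, 0 < G.mult u v → f u ≠ f v}
/-- The multigraph obtained from `G` by deleting one of the edges joining
`u` and `v`. -/
def Multigraph.deleteEdge {V : Type} [DecidableEq V] (G : Multigraph V) (u v : V) :
    Multigraph V where
  mult x y := if (x = u ∧ y = v) ∨ (x = v ∧ y = u) then G.mult x y - 1 else G.mult x y
  symm := by
    intro x y
    try dsimp only
    by_cases h : (x = u ∧ y = v) ∨ (x = v ∧ y = u)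
    · rw [if_pos h, if_pos (by tauto), G.symm]
    · rw [if_neg h, if_neg (by tauto), G.symm]
  loopless := by
    intro x
    try dsimp only
    by_cases h : (x = u ∧ x = v) ∨ (x = v ∧ x = u)
    · rw [if_pos h, G.loopless]
    · rw [if_neg h, G.loopless]

/-- The multigraph obtained from `G` by contracting an edge joining `u` and `v`:
the vertex `v` is removed, the merged vertex is `u`, loops created at the merged
vertex are deleted, and all other parallel edges are retained. -/
def Multigraph.contractEdge {V : Type} [DecidableEq V] (G : Multigraph V) (u v : V) :
    Multigraph {x : V // x ≠ v} where
  mult x y :=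
    if x.1 = u ∧ y.1 = u then 0
    else if x.1 = u then G.mult u y.1 + G.mult v y.1
    else if y.1 = u then G.mult x.1 u + G.mult x.1 v
    else G.mult x.1 y.1
  symm := by
    intro x y
    try dsimp only
    by_cases h1 : x.1 = u <;> by_cases h2 : y.1 = u <;>
      simp only [h1, h2, and_true, and_false, true_and, false_and, if_true, if_false,
        ite_true, ite_false, if_pos, if_neg, not_false_iff] <;>
      first
        | rfl
        | (rw [G.symm u, G.symm v])
        | rw [G.symm]
  loopless := by
    intro x
    try dsimp only
    by_cases h : x.1 = u
    · rw [if_pos ⟨h, h⟩]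
    · rw [if_neg (by tauto), if_neg h, if_neg h, G.loopless]

/-- The cover of `G - e` induced by a cover of `G`, where `e` is the `i`-th edge
joining `u` and `v`: the matching of `e` is deleted and the remaining matchings
between the lists of `u` and `v` are reindexed. -/
def FullCover.deleteEdge {V : Type} [DecidableEq V] {G : Multigraph V} {m : ℕ}
    (c : FullCover G m) (u v : V) (i : ℕ) : FullCover (G.deleteEdge u v) m where
  perm x y j :=
    if (x = u ∧ y = v) ∨ (x = v ∧ y = u) then
      c.perm x y (if j < i then j else j + 1)
    else c.perm x y j
  compat := by
    intro x y j
    try dsimp only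
    by_cases h : (x = u ∧ y = v) ∨ (x = v ∧ y = u)
    · rw [if_pos (by tauto), if_pos h, c.compat]
    · rw [if_neg (by tauto), if_neg h, c.compat]

/-- The cover of `G · e` induced by a cover of `G`, where `e` is the `i`-th edge
joining `u` and `v`: the lists of `u` and `v` are merged along the matching of
`e` (with the merged vertex labelled `u`), and all other matchings are carried
over accordingly. -/
def FullCover.contractEdge {V : Type} [DecidableEq V] {G : Multigraph V} {m : ℕ}
    (c : FullCover G m) (u v : V) (i : ℕ) : FullCover (G.contractEdge u v) m where
  perm x y j :=
    if x.1 = u ∧ y.1 = u then Equiv.refl _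
    else if x.1 = u then
      (if j < G.mult u y.1 then c.perm u y.1 j
       else (c.perm u v i).trans (c.perm v y.1 (j - G.mult u y.1)))
    else if y.1 = u then
      (if j < G.mult x.1 u then c.perm x.1 u j
       else (c.perm x.1 v (j - G.mult x.1 u)).trans (c.perm u v i).symm)
    else c.perm x.1 y.1 j
  compat := by
    intro x y j
    try dsimp only
    by_cases h1 : x.1 = u <;> by_cases h2 : y.1 = u <;>
      simp only [h1, h2, and_true, and_false, true_and, false_and, if_true, if_false,
        ite_true, ite_false, not_false_iff]
    · rfl
    · rw [G.symm y.1 u]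
      by_cases hj : j < G.mult u y.1
      · rw [if_pos hj, if_pos hj, c.compat]
      · rw [if_neg hj, if_neg hj, c.compat]
        rfl
    · rw [G.symm x.1 u]
      by_cases hj : j < G.mult u x.1
      · rw [if_pos hj, if_pos hj, c.compat]
      · rw [if_neg hj, if_neg hj, c.compat x.1 v (j - G.mult u x.1)]
        rfl
    · rw [c.compat]


section Aux
set_option linter.unusedSectionVars false

variable {V : Type} [Fintype V] [DecidableEq V] {G : Multigraph V} {m : ℕ}

lemma colA (c : FullCover G m) {u v : V} (hne : u ≠ v) (he : 0 < G.mult u v)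
    (f : V → Fin m) (hf : (c.deleteEdge u v (G.mult u v - 1)).IsColoring f)
    (hA : c.perm u v (G.mult u v - 1) (f u) ≠ f v) : c.IsColoring f := by
  set i := G.mult u v - 1 with hidef
  intro x y j hj
  by_cases hxy : (x = u ∧ y = v) ∨ (x = v ∧ y = u)
  · have hmult : G.mult x y = G.mult u v := by
      rcases hxy with ⟨hx, hy⟩ | ⟨hx, hy⟩
      · rw [hx, hy]
      · rw [hx, hy, G.symm]
    by_cases hji : j < i
    · have h := hf x y j (by
        simp only [Multigraph.deleteEdge, if_pos hxy]
        omega)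
      simpa only [FullCover.deleteEdge, if_pos hxy, if_pos hji] using h
    · have hj_eq : j = i := by omega
      subst hj_eq
      rcases hxy with ⟨hx, hy⟩ | ⟨hx, hy⟩
      · subst hx; subst hy; exact hA
      · subst hx; subst hy
        rw [c.compat]
        intro h
        apply hA
        rw [← h, Equiv.apply_symm_apply]
  · have h := hf x y j (by
      simp only [Multigraph.deleteEdge, if_neg hxy]; exact hj)
    simpa only [FullCover.deleteEdge, if_neg hxy] using h

lemma colB (c : FullCover G m) {u v : V} (hne : u ≠ v) (he : 0 < G.mult u v)
    (f : V → Fin m) (hf : (c.deleteEdge u v (G.mult u v - 1)).IsColoring f)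
    (hB : c.perm u v (G.mult u v - 1) (f u) = f v) :
    (c.contractEdge u v (G.mult u v - 1)).IsColoring (fun x => f x.1) := by
  set i := G.mult u v - 1 with hidef
  have hvu : v ≠ u := hne.symm
  intro x y j hj
  have hxv : x.1 ≠ v := x.2
  have hyv : y.1 ≠ v := y.2
  simp only [Multigraph.contractEdge] at hj
  simp only [FullCover.contractEdge]
  by_cases h1 : x.1 = u <;> by_cases h2 : y.1 = u
  · rw [if_pos ⟨h1, h2⟩] at hj
    omega
  · -- x.1 = u, y.1 ≠ u
    rw [if_neg (fun hc => h2 hc.2), if_pos h1] at hj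
    rw [if_neg (fun hc => h2 hc.2), if_pos h1, h1]
    by_cases hju : j < G.mult u y.1
    · rw [if_pos hju]
      have h := hf u y.1 j ?_
      · simp only [FullCover.deleteEdge] at h
        rw [if_neg] at h
        · exact h
        · tauto
      · show j < (G.deleteEdge u v).mult u y.1
        simp only [Multigraph.deleteEdge]
        rw [if_neg]
        · exact hju
        · tauto
    · rw [if_neg hju]
      have hk : j - G.mult u y.1 < G.mult v y.1 := by omega
      have h := hf v y.1 (j - G.mult u y.1) ?_
      · simp only [FullCover.deleteEdge] at h
        rw [if_neg] at h
        · simpa only [Equiv.trans_apply, hB] using h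
        · tauto
      · show j - G.mult u y.1 < (G.deleteEdge u v).mult v y.1
        simp only [Multigraph.deleteEdge]
        rw [if_neg]
        · exact hk
        · tauto
  · -- x.1 ≠ u, y.1 = u
    rw [if_neg (fun hc => h1 hc.1), if_neg h1, if_pos h2] at hj
    rw [if_neg (fun hc => h1 hc.1), if_neg h1, if_pos h2, h2]
    by_cases hju : j < G.mult x.1 u
    · rw [if_pos hju]
      have h := hf x.1 u j ?_
      · simp only [FullCover.deleteEdge] at h
        rw [if_neg] at h
        · exact h
        · tauto
      · show j < (G.deleteEdge u v).mult x.1 u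
        simp only [Multigraph.deleteEdge]
        rw [if_neg]
        · exact hju
        · tauto
    · rw [if_neg hju]
      have hk : j - G.mult x.1 u < G.mult x.1 v := by omega
      have h := hf x.1 v (j - G.mult x.1 u) ?_
      · simp only [FullCover.deleteEdge] at h
        rw [if_neg] at h
        · simp only [Equiv.trans_apply]
          intro hcon
          apply h
          rw [← hB, ← hcon, Equiv.apply_symm_apply]
        · tauto
      · show j - G.mult x.1 u < (G.deleteEdge u v).mult x.1 v
        simp only [Multigraph.deleteEdge]
        rw [if_neg]
        · exact hk
        · tauto
  · -- neither is u
    rw [if_neg (fun hc => h1 hc.1), if_neg h1, if_neg h2] at hj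
    rw [if_neg (fun hc => h1 hc.1), if_neg h1, if_neg h2]
    have h := hf x.1 y.1 j ?_
    · simp only [FullCover.deleteEdge] at h
      rw [if_neg] at h
      · exact h
      · tauto
    · show j < (G.deleteEdge u v).mult x.1 y.1
      simp only [Multigraph.deleteEdge]
      rw [if_neg]
      · exact hj
      · tauto

lemma key_card (c : FullCover G m) {u v : V} (hne : u ≠ v) (he : 0 < G.mult u v) :
    (c.deleteEdge u v (G.mult u v - 1)).numColorings ≤
      c.numColorings + (c.contractEdge u v (G.mult u v - 1)).numColorings := by
  classical
  set i := G.mult u v - 1 with hidef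
  let Φ : {f : V → Fin m // (c.deleteEdge u v i).IsColoring f} →
      {f : V → Fin m // c.IsColoring f} ⊕
        {g : {x : V // x ≠ v} → Fin m // (c.contractEdge u v i).IsColoring g} :=
    fun f => if h : c.perm u v i (f.1 u) = f.1 v
      then Sum.inr ⟨fun x => f.1 x.1, colB c hne he f.1 f.2 h⟩
      else Sum.inl ⟨f.1, colA c hne he f.1 f.2 h⟩
  have hΦ : Function.Injective Φ := by
    intro f1 f2 heq
    simp only [Φ] at heq
    split_ifs at heq with ha hb
    · simp only [Sum.inr.injEq, Subtype.mk.injEq] at heq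
      apply Subtype.ext; funext x
      by_cases hx : x = v
      · subst hx
        have hu : f1.1 u = f2.1 u := congrFun heq ⟨u, hne⟩
        rw [← ha, ← hb, hu]
      · exact congrFun heq ⟨x, hx⟩
    all_goals first
      | (simp only [Sum.inl.injEq, Subtype.mk.injEq] at heq
         exact Subtype.ext heq)
      | exact absurd heq (by simp)
  calc (c.deleteEdge u v i).numColorings
      ≤ Nat.card ({f : V → Fin m // c.IsColoring f} ⊕
          {g : {x : V // x ≠ v} → Fin m // (c.contractEdge u v i).IsColoring g}) :=
        Nat.card_le_card_of_injective Φ hΦ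
    _ = c.numColorings + (c.contractEdge u v i).numColorings := Nat.card_sum

end Aux

/-- Deletion-contraction lower bound for the DP color function: for every
multigraph `G`, edge `e` of `G` (joining `u` and `v`), and every `m`,
`P_DP(G-e,m) - P*_DP(G·e,m) ≤ P_DP(G,m)`. -/
theorem PDP_deletion_contraction_lower {V : Type} [Fintype V] [DecidableEq V]
    (G : Multigraph V) (u v : V) (he : 0 < G.mult u v) (m : ℕ) :
    ((G.deleteEdge u v).PDP m : ℤ) - ((G.contractEdge u v).PDPdual m : ℤ) ≤
      (G.PDP m : ℤ) := by
  classical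
  have hne : u ≠ v := by
    intro h; subst h; simp [G.loopless] at he
  set i := G.mult u v - 1 with hidef
  have hSne : {n | ∃ c : FullCover G m, n = c.numColorings}.Nonempty :=
    ⟨_, ⟨⟨fun _ _ _ => Equiv.refl _, fun _ _ _ => rfl⟩, rfl⟩⟩
  obtain ⟨c, hc⟩ := Nat.sInf_mem hSne
  have h1 : (G.deleteEdge u v).PDP m ≤ (c.deleteEdge u v i).numColorings :=
    Nat.sInf_le ⟨_, rfl⟩
  have h2 : (c.contractEdge u v i).numColorings ≤ (G.contractEdge u v).PDPdual m := by
    have hmem : (c.contractEdge u v i).numColorings ∈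
        {n | ∃ d : FullCover (G.contractEdge u v) m, n = d.numColorings} := ⟨_, rfl⟩
    have hbdd : BddAbove {n | ∃ d : FullCover (G.contractEdge u v) m, n = d.numColorings} := by
      refine ⟨Nat.card ({x : V // x ≠ v} → Fin m), ?_⟩
      rintro n ⟨d, rfl⟩
      exact Nat.card_le_card_of_injective Subtype.val Subtype.val_injective
    exact le_csSup hbdd hmem
  have h3 := key_card c hne he
  have hc' : G.PDP m = c.numColorings := hc
  rw [← hidef] at h3
  omega
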